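/- The graph G constructed in the Exact 3-Cover reduction is chordal: every cycle of length at least 4 in G has a chord. -/

import Mathlib

def closedNbr {V : Type*} (G : SimpleGraph V) (v : V) : Set V :=
  insert v (G.neighborSet v)

def kVEDom {V : Type*} (G : SimpleGraph V) (k : ℕ) (D : Set V) : Prop :=
  ∀ u v : V, G.Adj u v → k ≤ ((closedNbr G u ∪ closedNbr G v) ∩ D).ncard

/-- Vertex set of the chordal graph built from an Exact 3-Cover instance:
`A = Fin (3q)` (vertices `a_i`), `B = Fin m` (vertices `b_j`), `P = Fin (k-2)`,
`Fin 2` (with `0 = u`, `1 = v`), `Y = Fin (3q)` (vertices `y_i`),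
`Fin (3q) × Fin (k-1)` (the cliques `Q_i`) and `Fin (3q) × Fin 2`
(with `(i,0) = z_i`, `(i,1) = l_i`). -/
abbrev X3CVert (q m k : ℕ) :=
  Fin (3 * q) ⊕ (Fin m ⊕ (Fin (k - 2) ⊕ (Fin 2 ⊕ (Fin (3 * q) ⊕
    ((Fin (3 * q) × Fin (k - 1)) ⊕ (Fin (3 * q) × Fin 2))))))

/-- The graph `G` constructed from the Exact 3-Cover instance `(X, C)`, where
`Cc j` is the 3-element subset of `X = Fin (3q)` corresponding to `c_j`:
`B`, `P`, `B ∪ P`, and each `Q_i` are cliques; `a_i b_j` is an edge iff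
`x_i ∈ c_j`; `v` is adjacent to all of `P` and to `u`; `y_i` is adjacent to
`a_i` and to all of `Q_i`; `z_i` is adjacent to all of `Q_i` and to `l_i`. -/
def x3cGraph (q m k : ℕ) (Cc : Fin m → Finset (Fin (3 * q))) :
    SimpleGraph (X3CVert q m k) :=
  SimpleGraph.fromRel (fun a b =>
    match a, b with
    | .inl i, .inr (.inl j) => i ∈ Cc j
    | .inr (.inl _), .inr (.inl _) => True
    | .inr (.inl _), .inr (.inr (.inl _)) => True
    | .inr (.inr (.inl _)), .inr (.inr (.inl _)) => True
    | .inr (.inr (.inl _)), .inr (.inr (.inr (.inl x))) => x = 1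
    | .inr (.inr (.inr (.inl _))), .inr (.inr (.inr (.inl _))) => True
    | .inl i, .inr (.inr (.inr (.inr (.inl i')))) => i = i'
    | .inr (.inr (.inr (.inr (.inl i)))),
        .inr (.inr (.inr (.inr (.inr (.inl (i', _)))))) => i = i'
    | .inr (.inr (.inr (.inr (.inr (.inl (i, _)))))),
        .inr (.inr (.inr (.inr (.inr (.inl (i', _)))))) => i = i'
    | .inr (.inr (.inr (.inr (.inr (.inl (i, _)))))),
        .inr (.inr (.inr (.inr (.inr (.inr (i', x)))))) => i = i' ∧ x = 0
    | .inr (.inr (.inr (.inr (.inr (.inr (i, _)))))),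
        .inr (.inr (.inr (.inr (.inr (.inr (i', _)))))) => i = i'
    | _, _ => False)

section WalkLemmas
open SimpleGraph Walk


variable {V : Type*} {G : SimpleGraph V}

lemma isPath_loop_eq_nil {v : V} (f : G.Walk v v) (hf : f.IsPath) : f = nil := by
  cases f with
  | nil => rfl
  | cons h f' =>
    exfalso
    have := hf.support_nodup
    simp [support_cons, f'.end_mem_support] at this

lemma path_not_edge : ∀ {u v : V} (e : G.Walk u v), e.IsPath → 2 ≤ e.length →
    s(u, v) ∉ e.edges := by
  intro u v e he hl hmem
  cases e with
  | nil => simp at hl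
  | cons h f =>
    rename_i w
    rw [edges_cons, List.mem_cons] at hmem
    have hu : u ∉ f.support := by
      have := he.support_nodup
      simp [support_cons] at this
      exact this.1
    rcases hmem with heq | hmem
    · rw [Sym2.eq_iff] at heq
      rcases heq with ⟨-, rfl⟩ | ⟨rfl, rfl⟩
      · have : f = nil := isPath_loop_eq_nil _ he.of_cons
        subst this; simp at hl
      · exact G.irrefl h
    · exact hu (f.fst_mem_support_of_mem_edges hmem)

lemma cycle_key_endpoint {x : V} (c : G.Walk x x) (hc : c.IsCycle) (hl : 4 ≤ c.length) :
    ∃ p n, p ≠ n ∧ G.Adj x p ∧ G.Adj x n ∧ p ∈ c.support ∧ n ∈ c.support ∧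
      s(p, n) ∉ c.edges := by
  cases c with
  | nil => simp at hl
  | cons h d =>
    rename_i b
    -- d : Walk b x
    cases hrev : d.reverse with
    | nil =>
      exfalso
      have h0 : d.length = 0 := by
        have := congrArg Walk.length hrev
        simpa using this
      rw [length_cons, h0] at hl
      omega
    | cons h₂ f =>
      rename_i b'
      -- h₂ : Adj x b', f : Walk b' b
      have hd : d = (cons h₂ f).reverse := by rw [← hrev, reverse_reverse]
      have hxb : x ≠ b := fun hh => G.irrefl (hh ▸ h)
      have hxb' : x ≠ b' := fun hh => G.irrefl (hh ▸ h₂)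
      -- support/nodup facts
      have htail : ((cons h d).support.tail).Nodup := hc.support_nodup
      have hdsupp : d.support = f.support.reverse ++ [x] := by
        rw [hd, support_reverse, support_cons, List.reverse_cons]
      have htail' : (f.support.reverse ++ [x]).Nodup := by
        rwa [support_cons, List.tail_cons, hdsupp] at htail
      have hxf : x ∉ f.support := by
        intro hx
        have := List.disjoint_of_nodup_append htail'
        exact this (List.mem_reverse.2 hx) (List.mem_singleton.2 rfl)
      have hfnodup : f.support.Nodup := by
        have := (List.nodup_append.mp htail').1
        exact List.nodup_reverse.mp this
      have hfpath : f.IsPath := (isPath_def f).mpr hfnodup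
      have hflen : 2 ≤ f.length := by
        have : (cons h d).length = f.length + 2 := by
          rw [length_cons, hd, length_reverse, length_cons]
        omega
      have hbb' : b ≠ b' := by
        rintro rfl
        have := isPath_loop_eq_nil f hfpath
        subst this; simp at hflen
      refine ⟨b, b', hbb', h, h₂, ?_, ?_, ?_⟩
      · simp [support_cons]
      · rw [support_cons, hdsupp]
        simp [f.start_mem_support]
      · -- edges
        have hedges : (cons h d).edges = s(x, b) :: (f.edges.reverse ++ [s(x, b')]) := by
          rw [edges_cons, hd, edges_reverse, edges_cons, List.reverse_cons]
        rw [hedges]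
        intro hmem
        rcases List.mem_cons.mp hmem with heq | hmem
        · rw [Sym2.eq_iff] at heq
          rcases heq with ⟨rfl, -⟩ | ⟨-, h2⟩
          · exact hxb rfl
          · exact hxb' h2.symm
        · rcases List.mem_append.mp hmem with hmem | hmem
          · rw [List.mem_reverse] at hmem
            have : s(b', b) ∈ f.edges := by rwa [Sym2.eq_swap] at hmem
            exact path_not_edge f hfpath hflen this
          · rw [List.mem_singleton, Sym2.eq_iff] at hmem
            rcases hmem with ⟨rfl, -⟩ | ⟨h1, -⟩
            · exact hxb rfl
            · exact hbb' h1

lemma mem_support_tail_of_closed {u x : V} (c : G.Walk u u) (hn : ¬ c.Nil)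
    (hx : x ∈ c.support) : x ∈ c.support.tail := by
  cases c with
  | nil => exact absurd Walk.nil_nil hn
  | cons h d =>
    rw [support_cons, List.tail_cons]
    rcases List.mem_cons.mp hx with rfl | hx'
    · exact d.end_mem_support
    · exact hx'

lemma cycle_key [DecidableEq V] {x : V} (c : G.Walk x x) (hc : c.IsCycle) (hl : 4 ≤ c.length)
    {w : V} (hw : w ∈ c.support) :
    ∃ p n, p ≠ n ∧ G.Adj w p ∧ G.Adj w n ∧ p ∈ c.support ∧ n ∈ c.support ∧
      s(p, n) ∉ c.edges := by
  have hc' := hc.rotate hw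
  have hl' : 4 ≤ (c.rotate w hw).length := by
    have := (c.rotate_edges w hw).perm.length_eq
    rw [length_edges, length_edges] at this
    omega
  obtain ⟨p, n, h1, h2, h3, h4, h5, h6⟩ := cycle_key_endpoint (c.rotate w hw) hc' hl'
  have hmem : ∀ z, z ∈ (c.rotate w hw).support → z ∈ c.support := by
    intro z hz
    have hz' := mem_support_tail_of_closed _ hc'.not_nil hz
    have := (c.support_rotate w hw).perm.mem_iff.mp hz'
    exact List.mem_of_mem_tail this
  exact ⟨p, n, h1, h2, h3, hmem p h4, hmem n h5,
    fun hh => h6 (((c.rotate_edges w hw).perm.mem_iff).mpr hh)⟩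

end WalkLemmas

namespace X3CAux

variable {q m k : ℕ}

def vA (i : Fin (3 * q)) : X3CVert q m k := Sum.inl i
def vB (j : Fin m) : X3CVert q m k := Sum.inr (Sum.inl j)
def vP (t : Fin (k - 2)) : X3CVert q m k := Sum.inr (Sum.inr (Sum.inl t))
def vU (t : Fin 2) : X3CVert q m k := Sum.inr (Sum.inr (Sum.inr (Sum.inl t)))
def vY (i : Fin (3 * q)) : X3CVert q m k :=
  Sum.inr (Sum.inr (Sum.inr (Sum.inr (Sum.inl i))))
def vQ (i : Fin (3 * q)) (t : Fin (k - 1)) : X3CVert q m k :=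
  Sum.inr (Sum.inr (Sum.inr (Sum.inr (Sum.inr (Sum.inl (i, t))))))
def vZ (i : Fin (3 * q)) (t : Fin 2) : X3CVert q m k :=
  Sum.inr (Sum.inr (Sum.inr (Sum.inr (Sum.inr (Sum.inr (i, t))))))

variable (Cc : Fin m → Finset (Fin (3 * q)))

lemma adj_u (w : X3CVert q m k) (h : (x3cGraph q m k Cc).Adj (vU 0) w) :
    w = vU 1 := by
  rcases w with i|j|t|t|i|⟨i,t⟩|⟨i,t⟩ <;>
    simp [x3cGraph, vU] at h ⊢ <;> omega

lemma adj_l (i : Fin (3 * q)) (w : X3CVert q m k)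
    (h : (x3cGraph q m k Cc).Adj (vZ i 1) w) : w = vZ i 0 := by
  rcases w with i'|j|t|t|i'|⟨i',t⟩|⟨i',t⟩ <;>
    simp [x3cGraph, vZ] at h ⊢ <;> omega

lemma adj_z (i : Fin (3 * q)) (w : X3CVert q m k)
    (h : (x3cGraph q m k Cc).Adj (vZ i 0) w) :
    w = vZ i 1 ∨ ∃ t, w = vQ i t := by
  rcases w with i'|j|t|t|i'|⟨i',t⟩|⟨i',t⟩ <;>
    simp [x3cGraph, vZ, vQ] at h ⊢ <;> omega

lemma adj_Q (i : Fin (3 * q)) (t : Fin (k - 1)) (w : X3CVert q m k)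
    (h : (x3cGraph q m k Cc).Adj (vQ i t) w) :
    w = vY i ∨ (∃ t', w = vQ i t') ∨ w = vZ i 0 := by
  rcases w with i'|j|t'|t'|i'|⟨i',t'⟩|⟨i',t'⟩ <;>
    simp [x3cGraph, vZ, vQ, vY] at h ⊢ <;> omega

lemma adj_y (i : Fin (3 * q)) (w : X3CVert q m k)
    (h : (x3cGraph q m k Cc).Adj (vY i) w) :
    w = vA i ∨ ∃ t, w = vQ i t := by
  rcases w with i'|j|t|t|i'|⟨i',t⟩|⟨i',t⟩ <;>
    simp [x3cGraph, vA, vQ, vY] at h ⊢ <;> omega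

lemma adj_v (w : X3CVert q m k) (h : (x3cGraph q m k Cc).Adj (vU 1) w) :
    w = vU 0 ∨ ∃ t, w = vP t := by
  rcases w with i|j|t|t|i|⟨i,t⟩|⟨i,t⟩ <;>
    simp [x3cGraph, vU, vP] at h ⊢ <;> omega

lemma adj_p (s : Fin (k - 2)) (w : X3CVert q m k)
    (h : (x3cGraph q m k Cc).Adj (vP s) w) :
    (∃ j, w = vB j) ∨ (∃ t, w = vP t) ∨ w = vU 1 := by
  rcases w with i|j|t|t|i|⟨i,t⟩|⟨i,t⟩ <;>
    simp [x3cGraph, vU, vP, vB] at h ⊢ <;> omega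

lemma adj_a (i : Fin (3 * q)) (w : X3CVert q m k)
    (h : (x3cGraph q m k Cc).Adj (vA i) w) :
    (∃ j, w = vB j) ∨ w = vY i := by
  rcases w with i'|j|t|t|i'|⟨i',t⟩|⟨i',t⟩ <;>
    simp [x3cGraph, vA, vB, vY] at h ⊢ <;> omega

lemma adj_b (j : Fin m) (w : X3CVert q m k)
    (h : (x3cGraph q m k Cc).Adj (vB j) w) :
    (∃ i, w = vA i) ∨ (∃ j', w = vB j') ∨ (∃ t, w = vP t) := by
  rcases w with i|j'|t|t|i|⟨i,t⟩|⟨i,t⟩ <;>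
    simp [x3cGraph, vA, vB, vP] at h ⊢ <;> omega

lemma cl_B {j j' : Fin m} (h : j ≠ j') :
    (x3cGraph q m k Cc).Adj (vB j) (vB j') := by
  simp [x3cGraph, vB]; exact fun hh => h (by exact_mod_cast hh)

lemma cl_BP (j : Fin m) (t : Fin (k - 2)) :
    (x3cGraph q m k Cc).Adj (vB j) (vP t) := by
  simp [x3cGraph, vB, vP]

lemma cl_P {t t' : Fin (k - 2)} (h : t ≠ t') :
    (x3cGraph q m k Cc).Adj (vP t) (vP t') := by
  simp [x3cGraph, vP]; exact fun hh => h (by exact_mod_cast hh)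

lemma cl_Q {i : Fin (3 * q)} {t t' : Fin (k - 1)} (h : t ≠ t') :
    (x3cGraph q m k Cc).Adj (vQ i t) (vQ i t') := by
  simp [x3cGraph, vQ]; exact h

lemma cl_yQ (i : Fin (3 * q)) (t : Fin (k - 1)) :
    (x3cGraph q m k Cc).Adj (vY i) (vQ i t) := by
  simp [x3cGraph, vY, vQ]

end X3CAux

open SimpleGraph Walk X3CAux in
theorem x3cGraph_isChordal' (q m k : ℕ) (hk : 2 ≤ k)
    (Cc : Fin m → Finset (Fin (3 * q))) (h3 : ∀ j, (Cc j).card = 3) :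
    ∀ (x : X3CVert q m k) (c : (x3cGraph q m k Cc).Walk x x), c.IsCycle → 4 ≤ c.length →
    ∃ a b, (x3cGraph q m k Cc).Adj a b ∧ a ∈ c.support ∧ b ∈ c.support ∧
      s(a, b) ∉ c.edges := by
  intro x c hc hlen
  by_contra hch
  push_neg at hch
  have K : ∀ w ∈ c.support, ∃ p n, p ≠ n ∧ (x3cGraph q m k Cc).Adj w p ∧
      (x3cGraph q m k Cc).Adj w n ∧ p ∈ c.support ∧ n ∈ c.support ∧
      ¬ (x3cGraph q m k Cc).Adj p n := by
    intro w hw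
    obtain ⟨p, n, h1, h2, h3', h4, h5, h6⟩ := cycle_key c hc hlen hw
    exact ⟨p, n, h1, h2, h3', h4, h5, fun hadj => h6 (hch p n hadj h4 h5)⟩
  have no_u : (vU 0 : X3CVert q m k) ∉ c.support := by
    intro hw
    obtain ⟨p, n, hpn, hp, hn, _, _, _⟩ := K _ hw
    exact hpn ((adj_u Cc p hp).trans (adj_u Cc n hn).symm)
  have no_l : ∀ i, (vZ i 1 : X3CVert q m k) ∉ c.support := by
    intro i hw
    obtain ⟨p, n, hpn, hp, hn, _, _, _⟩ := K _ hw
    exact hpn ((adj_l Cc i p hp).trans (adj_l Cc i n hn).symm)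
  have no_z : ∀ i, (vZ i 0 : X3CVert q m k) ∉ c.support := by
    intro i hw
    obtain ⟨p, n, hpn, hp, hn, hps, hns, hnadj⟩ := K _ hw
    rcases adj_z Cc i p hp with rfl | ⟨t, rfl⟩
    · exact no_l i hps
    rcases adj_z Cc i n hn with rfl | ⟨t', rfl⟩
    · exact no_l i hns
    exact hnadj (cl_Q Cc (fun h => hpn (congrArg (vQ i) h)))
  have no_Q : ∀ i t, (vQ i t : X3CVert q m k) ∉ c.support := by
    intro i t hw
    obtain ⟨p, n, hpn, hp, hn, hps, hns, hnadj⟩ := K _ hw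
    rcases adj_Q Cc i t p hp with rfl | ⟨t1, rfl⟩ | rfl
    · rcases adj_Q Cc i t n hn with rfl | ⟨t2, rfl⟩ | rfl
      · exact hpn rfl
      · exact hnadj (cl_yQ Cc i t2)
      · exact no_z i hns
    · rcases adj_Q Cc i t n hn with rfl | ⟨t2, rfl⟩ | rfl
      · exact hnadj ((cl_yQ Cc i t1).symm)
      · exact hnadj (cl_Q Cc (fun h => hpn (congrArg (vQ i) h)))
      · exact no_z i hns
    · exact no_z i hps
  have no_y : ∀ i, (vY i : X3CVert q m k) ∉ c.support := by
    intro i hw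
    obtain ⟨p, n, hpn, hp, hn, hps, hns, hnadj⟩ := K _ hw
    rcases adj_y Cc i p hp with rfl | ⟨t, rfl⟩
    · rcases adj_y Cc i n hn with rfl | ⟨t, rfl⟩
      · exact hpn rfl
      · exact no_Q i t hns
    · exact no_Q i t hps
  have no_v : (vU 1 : X3CVert q m k) ∉ c.support := by
    intro hw
    obtain ⟨p, n, hpn, hp, hn, hps, hns, hnadj⟩ := K _ hw
    rcases adj_v Cc p hp with rfl | ⟨t, rfl⟩
    · exact no_u hps
    rcases adj_v Cc n hn with rfl | ⟨t', rfl⟩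
    · exact no_u hns
    exact hnadj (cl_P Cc (fun h => hpn (congrArg vP h)))
  have no_p : ∀ s, (vP s : X3CVert q m k) ∉ c.support := by
    intro s hw
    obtain ⟨p, n, hpn, hp, hn, hps, hns, hnadj⟩ := K _ hw
    rcases adj_p Cc s p hp with ⟨j, rfl⟩ | ⟨t, rfl⟩ | rfl
    · rcases adj_p Cc s n hn with ⟨j', rfl⟩ | ⟨t', rfl⟩ | rfl
      · exact hnadj (cl_B Cc (fun h => hpn (congrArg vB h)))
      · exact hnadj (cl_BP Cc j t')
      · exact no_v hns
    · rcases adj_p Cc s n hn with ⟨j', rfl⟩ | ⟨t', rfl⟩ | rfl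
      · exact hnadj ((cl_BP Cc j' t).symm)
      · exact hnadj (cl_P Cc (fun h => hpn (congrArg vP h)))
      · exact no_v hns
    · exact no_v hps
  have no_a : ∀ i, (vA i : X3CVert q m k) ∉ c.support := by
    intro i hw
    obtain ⟨p, n, hpn, hp, hn, hps, hns, hnadj⟩ := K _ hw
    rcases adj_a Cc i p hp with ⟨j, rfl⟩ | rfl
    · rcases adj_a Cc i n hn with ⟨j', rfl⟩ | rfl
      · exact hnadj (cl_B Cc (fun h => hpn (congrArg vB h)))
      · exact no_y i hns
    · exact no_y i hps
  have no_b : ∀ j, (vB j : X3CVert q m k) ∉ c.support := by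
    intro j hw
    obtain ⟨p, n, hpn, hp, hn, hps, hns, hnadj⟩ := K _ hw
    rcases adj_b Cc j p hp with ⟨i, rfl⟩ | ⟨j1, rfl⟩ | ⟨t, rfl⟩
    · exact no_a i hps
    · rcases adj_b Cc j n hn with ⟨i, rfl⟩ | ⟨j2, rfl⟩ | ⟨t, rfl⟩
      · exact no_a i hns
      · exact hnadj (cl_B Cc (fun h => hpn (congrArg vB h)))
      · exact hnadj (cl_BP Cc j1 t)
    · exact no_p t hps
  have hx := c.start_mem_support
  rcases x with i|j|t|t|i|⟨i,t⟩|⟨i,t⟩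
  · exact no_a i hx
  · exact no_b j hx
  · exact no_p t hx
  · fin_cases t
    · exact no_u hx
    · exact no_v hx
  · exact no_y i hx
  · exact no_Q i t hx
  · fin_cases t
    · exact no_z i hx
    · exact no_l i hx

/-- A graph is chordal if every cycle of length at least 4 has a chord, i.e.
an edge of the graph between two vertices of the cycle that is not an edge of
the cycle. -/
def IsChordal {V : Type*} (G : SimpleGraph V) : Prop :=
  ∀ (x : V) (c : G.Walk x x), c.IsCycle → 4 ≤ c.length →
    ∃ a b : V, G.Adj a b ∧ a ∈ c.support ∧ b ∈ c.support ∧ s(a, b) ∉ c.edges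


/-- The graph constructed in the Exact 3-Cover reduction is chordal. -/
theorem x3cGraph_isChordal (q m k : ℕ) (hk : 2 ≤ k)
    (Cc : Fin m → Finset (Fin (3 * q))) (h3 : ∀ j, (Cc j).card = 3) :
    IsChordal (x3cGraph q m k Cc) :=
  x3cGraph_isChordal' q m k hk Cc h3
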